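/- Let ρ be a nonzero σ-finite Borel measure on (0,1) with ∫₀¹ u ρ(du) < ∞; set φ(r) = ∫₀¹ (1 − (1−u)^r) ρ(du) and κ_{d,r}(ρ) = ∫₀¹ u^d (1−u)^r ρ(du). Let m = (D_1,…,D_k) be an ordered partition of {1,…,n} into nonempty blocks, with d_j = |D_j|, r_0 = 0, r_j = d_1 + ⋯ + d_j, and weight w(m) = Π_{j=1}^{k} κ_{d_j, r_{j−1}}(ρ)/φ(r_j). If m′ is the ordered partition of {1,…,n+1} obtained from m by inserting the new singleton block {n+1} at rank j (for some 1 ≤ j ≤ k+1, shifting blocks D_j,…,D_k to ranks j+1,…,k+1), then w(m′) = q_{j:n} · w(m), where q_{j:n} = [κ_{1, r_{j−1}}(ρ)/φ(r_{j−1}+1)] · Π_{l=j}^{k} [κ_{d_l, r_{l−1}+1}(ρ)/κ_{d_l, r_{l−1}}(ρ)] · Π_{l=j}^{k} φ(r_l)/φ(r_l+1); in particular q_{k+1:n} = κ_{1,n}(ρ)/φ(n+1). -/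
import Mathlib


open MeasureTheory

/-- κ_{d,r}(ρ) = ∫₀¹ u^d (1−u)^r ρ(du). -/
noncomputable def kappa (ρ : Measure ℝ) (d r : ℕ) : ℝ :=
  ∫ u in Set.Ioo (0:ℝ) 1, u ^ d * (1 - u) ^ r ∂ρ

/-- φ(r) = ∫₀¹ (1 − (1−u)^r) ρ(du). -/
noncomputable def phi (ρ : Measure ℝ) (r : ℕ) : ℝ :=
  ∫ u in Set.Ioo (0:ℝ) 1, (1 - (1 - u) ^ r) ∂ρ

/-- Cumulative block sizes: `cum D j = d_1 + ⋯ + d_j` (0-indexed), i.e. `r_{j-1}`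
when blocks are 1-indexed. -/
def cum (D : ℕ → Finset ℕ) (j : ℕ) : ℕ := ∑ i ∈ Finset.range j, (D i).card

/-- Weight of an ordered partition with blocks `D 0, …, D (k-1)`:
w(m) = Π_{j=1}^{k} κ_{d_j, r_{j−1}}(ρ)/φ(r_j). -/
noncomputable def wOrd (ρ : Measure ℝ) (D : ℕ → Finset ℕ) (k : ℕ) : ℝ :=
  ∏ j ∈ Finset.range k, kappa ρ (D j).card (cum D j) / phi ρ (cum D (j + 1))

lemma cum_succ (D : ℕ → Finset ℕ) (j : ℕ) :
    cum D (j + 1) = cum D j + (D j).card := Finset.sum_range_succ _ _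

lemma kappa_pos (ρ : Measure ℝ)
    (hρ : ρ (Set.Ioo (0:ℝ) 1) ≠ 0)
    (hu : IntegrableOn (fun u => u) (Set.Ioo (0:ℝ) 1) ρ)
    (d r : ℕ) (hd : 1 ≤ d) : 0 < kappa ρ d r := by
  have hmeas : AEStronglyMeasurable (fun u : ℝ => u ^ d * (1 - u) ^ r)
      (ρ.restrict (Set.Ioo 0 1)) := by
    exact ((continuous_pow d).mul ((continuous_const.sub continuous_id).pow r)).aestronglyMeasurable
  have hint : IntegrableOn (fun u : ℝ => u ^ d * (1 - u) ^ r) (Set.Ioo (0:ℝ) 1) ρ := by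
    refine hu.mono' hmeas ?_
    filter_upwards [ae_restrict_mem measurableSet_Ioo] with u hu'
    obtain ⟨h0, h1⟩ := hu'
    have h1u : (0:ℝ) ≤ 1 - u := by linarith
    rw [Real.norm_eq_abs, abs_of_nonneg (by positivity)]
    calc u ^ d * (1 - u) ^ r ≤ u ^ d * 1 := by
          gcongr
          exact pow_le_one₀ h1u (by linarith)
      _ = u ^ d := mul_one _
      _ ≤ u ^ 1 := pow_le_pow_of_le_one h0.le h1.le hd
      _ = u := pow_one u
  have hnn : 0 ≤ᵐ[ρ.restrict (Set.Ioo (0:ℝ) 1)] fun u : ℝ => u ^ d * (1 - u) ^ r := by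
    filter_upwards [ae_restrict_mem measurableSet_Ioo] with u hu'
    have h0 := hu'.1
    have h1u : (0:ℝ) ≤ 1 - u := by linarith [hu'.2]
    positivity
  rw [kappa, MeasureTheory.setIntegral_pos_iff_support_of_nonneg_ae hnn hint]
  have hsub : Set.Ioo (0:ℝ) 1 ⊆
      Function.support (fun u : ℝ => u ^ d * (1 - u) ^ r) ∩ Set.Ioo 0 1 := by
    intro u hu'
    refine ⟨?_, hu'⟩
    have h0 := hu'.1
    have h1u : (0:ℝ) < 1 - u := by linarith [hu'.2]
    simp only [Function.mem_support]
    positivity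
  exact lt_of_lt_of_le (pos_iff_ne_zero.mpr hρ) (measure_mono hsub)

lemma phi_pos (ρ : Measure ℝ)
    (hρ : ρ (Set.Ioo (0:ℝ) 1) ≠ 0)
    (hu : IntegrableOn (fun u => u) (Set.Ioo (0:ℝ) 1) ρ)
    (r : ℕ) (hr : 1 ≤ r) : 0 < phi ρ r := by
  have hmeas : AEStronglyMeasurable (fun u : ℝ => 1 - (1 - u) ^ r)
      (ρ.restrict (Set.Ioo 0 1)) := by
    exact (continuous_const.sub ((continuous_const.sub continuous_id).pow r)).aestronglyMeasurable
  have hint : IntegrableOn (fun u : ℝ => 1 - (1 - u) ^ r) (Set.Ioo (0:ℝ) 1) ρ := by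
    refine ((hu.const_mul (r:ℝ)).mono' hmeas ?_ : _)
    filter_upwards [ae_restrict_mem measurableSet_Ioo] with u hu'
    obtain ⟨h0, h1⟩ := hu'
    have h1u : (0:ℝ) ≤ 1 - u := by linarith
    have hb : 1 - (r:ℝ) * u ≤ (1 - u) ^ r := by
      have := one_add_mul_le_pow (a := -u) (by linarith) r
      have he : (1 + -u) = 1 - u := by ring
      rw [he] at this
      linarith
    have hle1 : (1 - u) ^ r ≤ 1 := pow_le_one₀ h1u (by linarith)
    rw [Real.norm_eq_abs, abs_of_nonneg (by linarith)]
    linarith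
  have hnn : 0 ≤ᵐ[ρ.restrict (Set.Ioo (0:ℝ) 1)] fun u : ℝ => 1 - (1 - u) ^ r := by
    filter_upwards [ae_restrict_mem measurableSet_Ioo] with u hu'
    have h1u : (0:ℝ) ≤ 1 - u := by linarith [hu'.2]
    have := pow_le_one₀ (n := r) h1u (by linarith [hu'.1] : (1:ℝ) - u ≤ 1)
    show (0:ℝ) ≤ 1 - (1 - u) ^ r
    linarith
  rw [phi, MeasureTheory.setIntegral_pos_iff_support_of_nonneg_ae hnn hint]
  have hsub : Set.Ioo (0:ℝ) 1 ⊆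
      Function.support (fun u : ℝ => 1 - (1 - u) ^ r) ∩ Set.Ioo 0 1 := by
    intro u hu'
    refine ⟨?_, hu'⟩
    have h1u : (0:ℝ) ≤ 1 - u := by linarith [hu'.2]
    have hlt : (1 - u) ^ r < 1 := pow_lt_one₀ h1u (by linarith [hu'.1]) (by omega)
    simp only [Function.mem_support]
    intro h
    linarith
  exact lt_of_lt_of_le (pos_iff_ne_zero.mpr hρ) (measure_mono hsub)

/-- Inserting the singleton block {n+1} at rank j (0-indexed `j0 = j − 1`,
`0 ≤ j0 ≤ k`, shifting blocks of rank ≥ j up by one) multiplies the weight of the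
ordered partition by the transition probability q_{j:n}; in particular
q_{k+1:n} = κ_{1,n}(ρ)/φ(n+1). -/
theorem stmt_3 (ρ : Measure ℝ) [SigmaFinite ρ]
    (hsupp : ρ (Set.Ioo (0:ℝ) 1)ᶜ = 0)
    (hρ : ρ (Set.Ioo (0:ℝ) 1) ≠ 0)
    (hu : IntegrableOn (fun u => u) (Set.Ioo (0:ℝ) 1) ρ)
    (n k : ℕ) (D : ℕ → Finset ℕ)
    (hne : ∀ i < k, (D i).Nonempty)
    (hdisj : ∀ i < k, ∀ i' < k, i ≠ i' → Disjoint (D i) (D i'))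
    (hcover : (Finset.range k).biUnion D = Finset.Icc 1 n)
    (j0 : ℕ) (hj0 : j0 ≤ k)
    (D' : ℕ → Finset ℕ)
    (hD' : D' = fun i =>
      if i < j0 then D i else if i = j0 then {n + 1} else D (i - 1))
    (q : ℝ)
    (hq : q = kappa ρ 1 (cum D j0) / phi ρ (cum D j0 + 1) *
        (∏ l ∈ Finset.Ico j0 k,
          kappa ρ (D l).card (cum D l + 1) / kappa ρ (D l).card (cum D l)) *
        ∏ l ∈ Finset.Ico j0 k, phi ρ (cum D (l + 1)) / phi ρ (cum D (l + 1) + 1)) :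
    wOrd ρ D' (k + 1) = q * wOrd ρ D k ∧
      (j0 = k → q = kappa ρ 1 n / phi ρ (n + 1)) := by
  -- basic facts about D'
  have hD'lt : ∀ i < j0, D' i = D i := by
    intro i hi; rw [hD']; simp [hi]
  have hD'eq : D' j0 = {n + 1} := by
    rw [hD']; simp
  have hD'gt : ∀ i, j0 < i → D' i = D (i - 1) := by
    intro i hi; rw [hD']
    simp [Nat.not_lt.mpr hi.le, Nat.ne_of_gt hi, (Nat.ne_of_gt hi).symm]
  -- cumulative sums of D'
  have hcum_le : ∀ j ≤ j0, cum D' j = cum D j := by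
    intro j hj
    refine Finset.sum_congr rfl fun i hi => ?_
    have hij : i < j0 := lt_of_lt_of_le (Finset.mem_range.mp hi) hj
    rw [hD'lt i hij]
  have hcum_gt : ∀ t, cum D' (j0 + 1 + t) = cum D (j0 + t) + 1 := by
    intro t
    induction t with
    | zero =>
        have : j0 + 1 + 0 = j0 + 1 := rfl
        rw [this, cum_succ, hcum_le j0 le_rfl, hD'eq]
        simp
    | succ t ih =>
        have h1 : j0 + 1 + (t + 1) = (j0 + 1 + t) + 1 := by omega
        rw [h1, cum_succ, ih, hD'gt (j0 + 1 + t) (by omega)]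
        have h2 : j0 + 1 + t - 1 = j0 + t := by omega
        rw [h2, show j0 + (t + 1) = (j0 + t) + 1 by omega, cum_succ]
        omega
  -- positivity
  have hcum1 : ∀ l < k, 1 ≤ cum D (l + 1) := by
    intro l hl
    have := Finset.card_pos.mpr (hne l hl)
    rw [cum_succ]; omega
  have hAne : ∀ l < k, kappa ρ (D l).card (cum D l) ≠ 0 := fun l hl =>
    (kappa_pos ρ hρ hu _ _ (Finset.card_pos.mpr (hne l hl))).ne'
  have hBne : ∀ l < k, phi ρ (cum D (l + 1)) ≠ 0 := fun l hl =>
    (phi_pos ρ hρ hu _ (hcum1 l hl)).ne'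
  -- total size
  have hcumk : cum D k = n := by
    have hc := Finset.card_biUnion (fun i hi i' hi' h =>
      hdisj i (Finset.mem_range.mp hi) i' (Finset.mem_range.mp hi') h)
    rw [hcover] at hc
    simpa [cum, Nat.card_Icc] using hc.symm
  constructor
  · -- main identity
    -- decompose LHS
    have hL : wOrd ρ D' (k + 1) =
        (∏ j ∈ Finset.range j0, kappa ρ (D j).card (cum D j) / phi ρ (cum D (j + 1))) *
        ((kappa ρ 1 (cum D j0) / phi ρ (cum D j0 + 1)) *
          ∏ l ∈ Finset.Ico j0 k,
            kappa ρ (D l).card (cum D l + 1) / phi ρ (cum D (l + 1) + 1)) := by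
      rw [wOrd, ← Finset.prod_range_mul_prod_Ico _ (show j0 ≤ k + 1 by omega)]
      congr 1
      · refine Finset.prod_congr rfl fun i hi => ?_
        have hi' := Finset.mem_range.mp hi
        rw [hD'lt i hi', hcum_le i hi'.le, hcum_le (i + 1) (by omega)]
      · rw [Finset.prod_eq_prod_Ico_succ_bot (show j0 < k + 1 by omega)]
        congr 1
        · rw [hD'eq, hcum_le j0 le_rfl, show j0 + 1 = j0 + 1 + 0 by rfl, hcum_gt 0]
          simp
        · rw [Finset.prod_Ico_eq_prod_range, Finset.prod_Ico_eq_prod_range]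
          have hk : k + 1 - (j0 + 1) = k - j0 := by omega
          rw [hk]
          refine Finset.prod_congr rfl fun i _ => ?_
          rw [hD'gt (j0 + 1 + i) (by omega),
            show j0 + 1 + i - 1 = j0 + i by omega, hcum_gt i,
            show j0 + 1 + i + 1 = j0 + 1 + (i + 1) by omega, hcum_gt (i + 1),
            show j0 + (i + 1) = j0 + i + 1 by omega]
    -- decompose RHS weight
    have hW : wOrd ρ D k =
        (∏ j ∈ Finset.range j0, kappa ρ (D j).card (cum D j) / phi ρ (cum D (j + 1))) *
        ∏ l ∈ Finset.Ico j0 k,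
          kappa ρ (D l).card (cum D l) / phi ρ (cum D (l + 1)) := by
      rw [wOrd, ← Finset.prod_range_mul_prod_Ico _ hj0]
    have hprod : ∏ l ∈ Finset.Ico j0 k,
          kappa ρ (D l).card (cum D l + 1) / phi ρ (cum D (l + 1) + 1) =
        (∏ l ∈ Finset.Ico j0 k,
          kappa ρ (D l).card (cum D l + 1) / kappa ρ (D l).card (cum D l)) *
        (∏ l ∈ Finset.Ico j0 k,
          phi ρ (cum D (l + 1)) / phi ρ (cum D (l + 1) + 1)) *
        ∏ l ∈ Finset.Ico j0 k,
          kappa ρ (D l).card (cum D l) / phi ρ (cum D (l + 1)) := by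
      rw [← Finset.prod_mul_distrib, ← Finset.prod_mul_distrib]
      refine Finset.prod_congr rfl fun l hl => ?_
      have hlk := (Finset.mem_Ico.mp hl).2
      have hA := hAne l hlk
      have hB := hBne l hlk
      have step : kappa ρ (D l).card (cum D l + 1) / kappa ρ (D l).card (cum D l) *
            (phi ρ (cum D (l + 1)) / phi ρ (cum D (l + 1) + 1)) *
            (kappa ρ (D l).card (cum D l) / phi ρ (cum D (l + 1))) =
          kappa ρ (D l).card (cum D l + 1) / phi ρ (cum D (l + 1) + 1) *
            (kappa ρ (D l).card (cum D l) / kappa ρ (D l).card (cum D l)) *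
            (phi ρ (cum D (l + 1)) / phi ρ (cum D (l + 1))) := by ring
      rw [step, div_self hA, div_self hB, mul_one, mul_one]
    rw [hL, hW, hq, hprod]
    ring
  · -- particular case j0 = k
    intro hjk
    subst hjk
    simp [hq, hcumk]
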